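/- Let n ≥ 1, let V : ℝ → Matrix (Fin n) (Fin n) ℝ with V(x) symmetric for every x, let E ∈ ℝ, and let Y, Y₁ : ℝ → Matrix (Fin n) (Fin n) ℝ be such that Y has derivative Y₁(x) at every x and Y₁ has derivative (V(x) − E•I)·Y(x) at every x. Then the function x ↦ Y(x)ᵀ·Y₁(x) − Y₁(x)ᵀ·Y(x) is constant on ℝ. In particular, if Y(a)ᵀ·Y₁(a) = Y₁(a)ᵀ·Y(a) for some a, then for every x at which Y₁(x) is invertible, the matrix Ψ(x) = Y(x)·(Y₁(x))⁻¹ is symmetric. -/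

import Mathlib

attribute [local instance] Matrix.normedAddCommGroup Matrix.normedSpace

open scoped Matrix

lemma hasDerivAt_entry {n : ℕ} {A : ℝ → Matrix (Fin n) (Fin n) ℝ}
    {A' : Matrix (Fin n) (Fin n) ℝ} {x : ℝ} (hA : HasDerivAt A A' x) (i j : Fin n) :
    HasDerivAt (fun t => A t i j) (A' i j) x := by
  have h1 := (hasDerivAt_pi.mp hA) i
  exact (hasDerivAt_pi.mp h1) j

lemma hasDerivAt_matrix_mul {n : ℕ} {A B : ℝ → Matrix (Fin n) (Fin n) ℝ}
    {A' B' : Matrix (Fin n) (Fin n) ℝ} {x : ℝ}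
    (hA : HasDerivAt A A' x) (hB : HasDerivAt B B' x) :
    HasDerivAt (fun t => A t * B t) (A' * B x + A x * B') x := by
  refine hasDerivAt_pi.mpr ?_
  intro i
  refine hasDerivAt_pi.mpr ?_
  intro j
  have : ∀ t, (A t * B t) i j = ∑ k, A t i k * B t k j := by
    intro t; simp [Matrix.mul_apply]
  simp only [this]
  have : (A' * B x + A x * B') i j
      = ∑ k, (A' i k * B x k j + A x i k * B' k j) := by
    simp [Matrix.mul_apply, Finset.sum_add_distrib]
  rw [this]
  exact HasDerivAt.fun_sum fun k _ =>
    (hasDerivAt_entry hA i k).mul (hasDerivAt_entry hB k j)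

lemma hasDerivAt_matrix_transpose {n : ℕ} {A : ℝ → Matrix (Fin n) (Fin n) ℝ}
    {A' : Matrix (Fin n) (Fin n) ℝ} {x : ℝ} (hA : HasDerivAt A A' x) :
    HasDerivAt (fun t => (A t)ᵀ) A'ᵀ x := by
  refine hasDerivAt_pi.mpr ?_
  intro i
  refine hasDerivAt_pi.mpr ?_
  intro j
  exact hasDerivAt_entry hA j i

/-- For a symmetric-valued potential, the Wronskian-type matrix
`Yᵀ·Y' - (Y')ᵀ·Y` of a solution of `Y'' = (V(x) - E·I)·Y` is constant;
in particular if it vanishes at one point then `Ψ = Y·(Y')⁻¹` is symmetric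
wherever `Y'` is invertible. -/
theorem wronskian_const_and_psi_symm (n : ℕ) (hn : 1 ≤ n)
    (V : ℝ → Matrix (Fin n) (Fin n) ℝ) (hV : ∀ x, (V x)ᵀ = V x) (E : ℝ)
    (Y Y₁ : ℝ → Matrix (Fin n) (Fin n) ℝ)
    (hY : ∀ x, HasDerivAt Y (Y₁ x) x)
    (hY₁ : ∀ x, HasDerivAt Y₁ ((V x - E • (1 : Matrix (Fin n) (Fin n) ℝ)) * Y x) x) :
    (∀ x y : ℝ,
        (Y x)ᵀ * Y₁ x - (Y₁ x)ᵀ * Y x = (Y y)ᵀ * Y₁ y - (Y₁ y)ᵀ * Y y) ∧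
    (∀ a : ℝ, (Y a)ᵀ * Y₁ a = (Y₁ a)ᵀ * Y a →
      ∀ x : ℝ, IsUnit (Y₁ x) → (Y x * (Y₁ x)⁻¹)ᵀ = Y x * (Y₁ x)⁻¹) := by
  set W : ℝ → Matrix (Fin n) (Fin n) ℝ :=
    fun x => (Y x)ᵀ * Y₁ x - (Y₁ x)ᵀ * Y x with hW
  have hWd : ∀ x, HasDerivAt W 0 x := by
    intro x
    have h1 : HasDerivAt (fun t => (Y t)ᵀ * Y₁ t)
        ((Y₁ x)ᵀ * Y₁ x + (Y x)ᵀ * ((V x - E • 1) * Y x)) x :=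
      hasDerivAt_matrix_mul (hasDerivAt_matrix_transpose (hY x)) (hY₁ x)
    have h2 : HasDerivAt (fun t => (Y₁ t)ᵀ * Y t)
        (((V x - E • 1) * Y x)ᵀ * Y x + (Y₁ x)ᵀ * Y₁ x) x :=
      hasDerivAt_matrix_mul (hasDerivAt_matrix_transpose (hY₁ x)) (hY x)
    have := h1.sub h2
    have hsym : (V x - E • (1 : Matrix (Fin n) (Fin n) ℝ))ᵀ = V x - E • 1 := by
      simp [Matrix.transpose_sub, hV x, Matrix.transpose_smul]
    have hzero : (Y₁ x)ᵀ * Y₁ x + (Y x)ᵀ * ((V x - E • 1) * Y x)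
        - (((V x - E • 1) * Y x)ᵀ * Y x + (Y₁ x)ᵀ * Y₁ x) = 0 := by
      rw [Matrix.transpose_mul, hsym, Matrix.mul_assoc]
      abel
    rwa [hzero] at this
  have hconst : ∀ x y : ℝ, W x = W y := by
    intro x y
    have : ∀ t, deriv W t = 0 := fun t => (hWd t).deriv
    have hdiff : Differentiable ℝ W := fun t => (hWd t).differentiableAt
    exact is_const_of_deriv_eq_zero hdiff this x y
  refine ⟨hconst, ?_⟩
  intro a ha x hx
  have hWx : (Y x)ᵀ * Y₁ x = (Y₁ x)ᵀ * Y x := by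
    have := hconst x a
    simp only [hW] at this
    have ha' : (Y a)ᵀ * Y₁ a - (Y₁ a)ᵀ * Y a = 0 := by rw [ha]; simp
    rw [ha'] at this
    exact sub_eq_zero.mp this
  haveI := hx.invertible
  have hxd : IsUnit (Y₁ x).det := (Matrix.isUnit_iff_isUnit_det _).mp hx
  have hxt : IsUnit (Y₁ x)ᵀ.det := by simpa using hxd
  calc (Y x * (Y₁ x)⁻¹)ᵀ = ((Y₁ x)⁻¹)ᵀ * (Y x)ᵀ := by rw [Matrix.transpose_mul]
    _ = ((Y₁ x)ᵀ)⁻¹ * (Y x)ᵀ := by rw [Matrix.transpose_nonsing_inv]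
    _ = ((Y₁ x)ᵀ)⁻¹ * ((Y x)ᵀ * Y₁ x) * (Y₁ x)⁻¹ := by
        rw [Matrix.mul_assoc, Matrix.mul_assoc, Matrix.mul_nonsing_inv _ hxd,
          Matrix.mul_one]
    _ = ((Y₁ x)ᵀ)⁻¹ * ((Y₁ x)ᵀ * Y x) * (Y₁ x)⁻¹ := by rw [hWx]
    _ = Y x * (Y₁ x)⁻¹ := by
        rw [← Matrix.mul_assoc, Matrix.nonsing_inv_mul _ hxt, Matrix.one_mul]
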